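/- Let ω ∈ Ω and let ε : ℤ² → [0,∞) vanish off the two axes, i.e. ε(x,y) = 0 whenever x·y ≠ 0. If ε(0,1) + ε(0,2) ≥ ε(1,0) and ε(1,0) + ε(2,0) ≥ ε(0,1), then V(T_{(1,1)}^{ω+ε}) ⊆ V(T_{(1,1)}^ω). -/

import Mathlib

open scoped NNReal

/-- A site of the lattice `ℤ²`. -/
abbrev Site : Type := ℤ × ℤ

/-- The positive quadrant `ℤ₊²`. -/
def posQuad : Set Site := {z : Site | 0 ≤ z.1 ∧ 0 ≤ z.2}

/-- An admissible (up-right) step. -/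
def IsStep (u v : Site) : Prop := v = u + (1, 0) ∨ v = u + (0, 1)

/-- `γ` is an up-right path from `(0,0)` to `z`, i.e. `γ ∈ Γ_z`. -/
def IsPathTo (z : Site) (γ : List Site) : Prop :=
  γ.head? = some ((0, 0) : Site) ∧ γ.getLast? = some z ∧ γ.Chain' IsStep

/-- The length `ω(γ) = Σ_{z ∈ γ} ω(z)` of a path `γ` under the configuration `ω`. -/
noncomputable def plen (ω : Site → ℝ) (γ : List Site) : ℝ := (γ.map ω).sum

/-- `γ ∈ Γ_z` is `ω`-optimal if its length is maximal over `Γ_z`. -/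
def IsOptimal (ω : Site → ℝ) (z : Site) (γ : List Site) : Prop :=
  IsPathTo z γ ∧ ∀ γ' : List Site, IsPathTo z γ' → plen ω γ' ≤ plen ω γ

/-- `γ` is below `γ'`: at every step index, the second coordinate of the site of `γ`
is at most that of the corresponding site of `γ'`. -/
def Below (γ γ' : List Site) : Prop :=
  ∀ (i : ℕ) (h : i < γ.length) (h' : i < γ'.length),
    (γ.get ⟨i, h⟩).2 ≤ (γ'.get ⟨i, h'⟩).2

/-- `γ` is the low-optimal path of `Γ_z`: it is `ω`-optimal and below every
`ω`-optimal path of `Γ_z`. -/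
def IsLowOptimal (ω : Site → ℝ) (z : Site) (γ : List Site) : Prop :=
  IsOptimal ω z γ ∧ ∀ γ' : List Site, IsOptimal ω z γ' → Below γ γ'

open Classical in
/-- The low-optimal path `γ_z^ω` (an arbitrary default when it does not exist). -/
noncomputable def lowOpt (ω : Site → ℝ) (z : Site) : List Site :=
  if h : ∃ γ : List Site, IsLowOptimal ω z γ then h.choose else []

/-- The vertex set `V(T_z^ω) = {z' ∈ ℤ₊² : z ∈ γ_{z'}^ω}` of the subtree rooted at `z`. -/
def treeV (ω : Site → ℝ) (z : Site) : Set Site :=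
  {z' : Site | z' ∈ posQuad ∧ z ∈ lowOpt ω z'}

/-! ### Auxiliary lemmas -/

lemma path_get_sum {z : Site} {γ : List Site} (h : IsPathTo z γ) :
    ∀ i (hi : i < γ.length), (γ.get ⟨i, hi⟩).1 + (γ.get ⟨i, hi⟩).2 = i := by
  intro i
  induction i with
  | zero =>
    intro hi
    obtain ⟨h0, -, -⟩ := h
    cases γ with
    | nil => simp at h0
    | cons a t => simp at h0; simp [h0]
  | succ n ih =>
    intro hi
    have hn : n < γ.length := by omega
    have hstep := List.isChain_iff_getElem.mp h.2.2 n (by omega)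
    have := ih hn
    rcases hstep with hs | hs <;>
      · rw [List.get_eq_getElem, hs]; simp [Prod.ext_iff] at *; omega

lemma path_length {z : Site} {γ : List Site} (h : IsPathTo z γ) :
    (γ.length : ℤ) = z.1 + z.2 + 1 := by
  have hne : γ ≠ [] := by
    intro hn; rw [hn] at h; simp [IsPathTo] at h
  have hlen : 0 < γ.length := List.length_pos_iff.mpr hne
  have hlast : γ.getLast? = some z := h.2.1
  rw [List.getLast?_eq_getElem? ] at hlast
  have h2 : γ[γ.length - 1]? = some (γ.get ⟨γ.length - 1, by omega⟩) := by
    simp [List.getElem?_eq_getElem (by omega : γ.length - 1 < γ.length)]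
  rw [h2] at hlast
  have := path_get_sum h (γ.length - 1) (by omega)
  rw [Option.some_inj] at hlast
  rw [hlast] at this
  omega

lemma finite_T : ∀ (k : ℕ) (a : Site),
    {γ : List Site | γ.head? = some a ∧ γ.Chain' IsStep ∧ γ.length = k}.Finite := by
  intro k
  induction k with
  | zero =>
    intro a
    apply Set.Finite.subset (Set.finite_empty)
    rintro γ ⟨h1, -, h3⟩
    cases γ <;> simp_all
  | succ n ih =>
    intro a
    apply Set.Finite.subset
      (Set.Finite.image (a :: ·)
        (((ih (a + (1,0))).union (ih (a + (0,1)))).union (Set.finite_singleton [])))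
    rintro γ ⟨h1, h2, h3⟩
    cases γ with
    | nil => simp at h1
    | cons b t =>
      simp at h1; subst h1
      simp only [Set.mem_image]
      refine ⟨t, ?_, rfl⟩
      cases t with
      | nil => right; rfl
      | cons c s =>
        left
        unfold List.Chain' at h2; rw [List.isChain_cons_cons] at h2
        rcases h2.1 with hs | hs <;> [left; right] <;>
          exact ⟨by simp [hs], h2.2, by simpa using h3⟩

lemma finite_paths (z : Site) : {γ : List Site | IsPathTo z γ}.Finite := by
  apply Set.Finite.subset (finite_T (z.1 + z.2 + 1).toNat ((0,0) : Site))
  rintro γ ⟨h1, h2, h3⟩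
  have := path_length ⟨h1, h2, h3⟩
  exact ⟨h1, h3, by omega⟩

lemma exists_optimal (ω : Site → ℝ) (z : Site) (hne : ∃ γ, IsPathTo z γ) :
    ∃ γ, IsOptimal ω z γ := by
  obtain ⟨a, ha, hmax⟩ := Set.Finite.exists_maximalFor (plen ω) _ (finite_paths z) hne
  refine ⟨a, ha, fun γ' hγ' => ?_⟩
  by_contra hlt
  push_neg at hlt
  exact absurd (hmax hγ' hlt.le) (not_le.mpr hlt)

def mmin (u v : Site) : Site := if u.2 ≤ v.2 then u else v

def mmax (u v : Site) : Site := if u.2 ≤ v.2 then v else u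

def minPath (γ γ' : List Site) : List Site := List.zipWith mmin γ γ'

def maxPath (γ γ' : List Site) : List Site := List.zipWith mmax γ γ'

lemma mmin_step {u u' v v' : Site} (hs : IsStep u v) (hs' : IsStep u' v')
    (hsum : u.1 + u.2 = u'.1 + u'.2) : IsStep (mmin u u') (mmin v v') := by
  unfold mmin IsStep at *
  obtain ⟨a, b⟩ := u; obtain ⟨c, d⟩ := u'; obtain ⟨p, q⟩ := v; obtain ⟨r, s⟩ := v'
  simp only [Prod.ext_iff, Prod.mk_add_mk] at *
  split_ifs <;> simp_all <;> omega

lemma getLast?_zipWith (f : Site → Site → Site) (γ γ' : List Site)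
    (hlen : γ.length = γ'.length) :
    (List.zipWith f γ γ').getLast? =
      match γ.getLast?, γ'.getLast? with
      | some a, some b => some (f a b)
      | _, _ => none := by
  rcases Nat.eq_zero_or_pos γ.length with h0 | hpos
  · have : γ = [] := List.length_eq_zero_iff.mp h0
    have : γ' = [] := List.length_eq_zero_iff.mp (by omega)
    subst this; simp_all [List.length_eq_zero_iff.mp h0]
  have hzl : (List.zipWith f γ γ').length = γ.length := by
    rw [List.length_zipWith]; omega
  rw [List.getLast?_eq_getElem?, hzl, List.getElem?_zipWith,
    List.getLast?_eq_getElem?, List.getLast?_eq_getElem?, ← hlen]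
  rcases hg : γ[γ.length - 1]? with _ | a <;>
    rcases hg' : γ'[γ.length - 1]? with _ | b <;> simp only [hg, hg']

lemma isPathTo_minPath {z : Site} {γ γ' : List Site}
    (h : IsPathTo z γ) (h' : IsPathTo z γ') : IsPathTo z (minPath γ γ') := by
  have hlen : γ.length = γ'.length := by
    have := path_length h; have := path_length h'; omega
  have hne : γ ≠ [] := by intro hn; rw [hn] at h; simp [IsPathTo] at h
  refine ⟨?_, ?_, ?_⟩
  · cases γ with
    | nil => simp at hne
    | cons a t =>
      cases γ' with
      | nil => simp at hlen
      | cons b s =>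
        have ha : a = ((0,0) : Site) := by have := h.1; simpa using this
        have hb : b = ((0,0) : Site) := by have := h'.1; simpa using this
        simp [minPath, ha, hb, mmin]
  · rw [minPath, getLast?_zipWith mmin γ γ' hlen, h.2.1, h'.2.1]
    simp [mmin]
  · unfold List.Chain'; rw [List.isChain_iff_getElem]
    intro i hi
    have hzl : (minPath γ γ').length = γ.length := by
      simp only [minPath]; rw [List.length_zipWith]; omega
    rw [hzl] at hi
    have hstep := List.isChain_iff_getElem.mp h.2.2 i (by omega)
    have hstep' := List.isChain_iff_getElem.mp h'.2.2 i (by omega)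
    have hsum := path_get_sum h i (by omega)
    have hsum' := path_get_sum h' i (by omega)
    have key := mmin_step hstep hstep' (by simp only [List.get_eq_getElem] at hsum hsum'; omega)
    simpa [minPath, List.get_eq_getElem, List.getElem_zipWith] using key

lemma mmax_step {u u' v v' : Site} (hs : IsStep u v) (hs' : IsStep u' v')
    (hsum : u.1 + u.2 = u'.1 + u'.2) : IsStep (mmax u u') (mmax v v') := by
  unfold mmax IsStep at *
  obtain ⟨a, b⟩ := u; obtain ⟨c, d⟩ := u'; obtain ⟨p, q⟩ := v; obtain ⟨r, s⟩ := v'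
  simp only [Prod.ext_iff, Prod.mk_add_mk] at *
  split_ifs <;> simp_all <;> omega

lemma isPathTo_maxPath {z : Site} {γ γ' : List Site}
    (h : IsPathTo z γ) (h' : IsPathTo z γ') : IsPathTo z (maxPath γ γ') := by
  have hlen : γ.length = γ'.length := by
    have := path_length h; have := path_length h'; omega
  have hne : γ ≠ [] := by intro hn; rw [hn] at h; simp [IsPathTo] at h
  refine ⟨?_, ?_, ?_⟩
  · cases γ with
    | nil => simp at hne
    | cons a t =>
      cases γ' with
      | nil => simp at hlen
      | cons b s =>
        have ha : a = ((0,0) : Site) := by have := h.1; simpa using this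
        have hb : b = ((0,0) : Site) := by have := h'.1; simpa using this
        simp [maxPath, ha, hb, mmax]
  · rw [maxPath, getLast?_zipWith mmax γ γ' hlen, h.2.1, h'.2.1]
    simp [mmax]
  · unfold List.Chain'; rw [List.isChain_iff_getElem]
    intro i hi
    have hzl : (maxPath γ γ').length = γ.length := by
      simp only [maxPath]; rw [List.length_zipWith]; omega
    rw [hzl] at hi
    have hstep := List.isChain_iff_getElem.mp h.2.2 i (by omega)
    have hstep' := List.isChain_iff_getElem.mp h'.2.2 i (by omega)
    have hsum := path_get_sum h i (by omega)
    have hsum' := path_get_sum h' i (by omega)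
    have key := mmax_step hstep hstep' (by simp only [List.get_eq_getElem] at hsum hsum'; omega)
    simpa [maxPath, List.get_eq_getElem, List.getElem_zipWith] using key

lemma below_minPath_left (γ γ' : List Site) : Below (minPath γ γ') γ := by
  intro i hz hg
  simp only [minPath, List.get_eq_getElem, List.getElem_zipWith]
  have hg' : i < γ'.length := by
    simp only [minPath] at hz; rw [List.length_zipWith] at hz; omega
  unfold mmin
  split <;> [exact le_refl _; omega]

lemma below_minPath_right (γ γ' : List Site) : Below (minPath γ γ') γ' := by
  intro i hz hg
  simp only [minPath, List.get_eq_getElem, List.getElem_zipWith]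
  unfold mmin
  split <;> [assumption; exact le_refl _]

lemma plen_min_add (ω : Site → ℝ) :
    ∀ (γ γ' : List Site), γ.length = γ'.length →
      plen ω (minPath γ γ') + plen ω (maxPath γ γ')
        = plen ω γ + plen ω γ' := by
  intro γ
  induction γ with
  | nil => intro γ' h; cases γ' <;> simp_all [minPath, maxPath, plen]
  | cons a t ih =>
    intro γ' h
    cases γ' with
    | nil => simp at h
    | cons b s =>
      simp only [List.length_cons, Nat.succ_inj] at h
      have := ih s h
      simp only [minPath, maxPath, List.zipWith_cons_cons, plen, List.map_cons,
        List.sum_cons] at *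
      have hpt : ω (mmin a b) + ω (mmax a b) = ω a + ω b := by
        unfold mmin mmax; split_ifs <;> ring
      linarith

lemma isOptimal_minPath {ω : Site → ℝ} {z : Site} {γ γ' : List Site}
    (h : IsOptimal ω z γ) (h' : IsOptimal ω z γ') : IsOptimal ω z (minPath γ γ') := by
  have hlen : γ.length = γ'.length := by
    have := path_length h.1; have := path_length h'.1; omega
  have hmaxpath : IsPathTo z (maxPath γ γ') := isPathTo_maxPath h.1 h'.1
  have hadd := plen_min_add ω γ γ' hlen
  have hle := h.2 _ hmaxpath
  refine ⟨isPathTo_minPath h.1 h'.1, fun τ hτ => ?_⟩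
  have := h'.2 τ hτ
  linarith

lemma below_trans {a b c : List Site} (h1 : Below a b) (h2 : Below b c)
    (hlen : a.length = b.length) : Below a c := by
  intro i hi hi'
  exact le_trans (h1 i hi (by omega)) (h2 i (by omega) hi')

lemma exists_lowOptimal (ω : Site → ℝ) (z : Site) (hne : ∃ γ, IsPathTo z γ) :
    ∃ γ, IsLowOptimal ω z γ := by
  obtain ⟨γ₀, hγ₀⟩ := exists_optimal ω z hne
  have key : ∀ s : Finset (List Site), (∀ γ ∈ s, IsOptimal ω z γ) →
      ∃ m, IsOptimal ω z m ∧ ∀ γ ∈ s, Below m γ := by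
    intro s
    induction s using Finset.induction_on with
    | empty => intro _; exact ⟨γ₀, hγ₀, by simp⟩
    | @insert a s ha ih =>
      intro hall
      obtain ⟨m, hm, hbel⟩ := ih (fun γ hγ => hall γ (Finset.mem_insert_of_mem hγ))
      have haopt : IsOptimal ω z a := hall a (Finset.mem_insert_self a s)
      refine ⟨minPath m a, isOptimal_minPath hm haopt, ?_⟩
      intro γ hγ
      rcases Finset.mem_insert.mp hγ with rfl | hγs
      · exact below_minPath_right m γ
      · refine below_trans (below_minPath_left m a) (hbel γ hγs) ?_
        have l1 := path_length (isOptimal_minPath hm haopt).1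
        have l2 := path_length hm.1
        omega
  have hOfin : {γ | IsOptimal ω z γ}.Finite :=
    (finite_paths z).subset (fun γ hγ => hγ.1)
  obtain ⟨m, hm, hbel⟩ := key hOfin.toFinset (fun γ hγ => (hOfin.mem_toFinset.mp hγ))
  exact ⟨m, hm, fun γ' hγ' => hbel γ' (hOfin.mem_toFinset.mpr hγ')⟩

lemma plen_add (ω ε : Site → ℝ) (γ : List Site) :
    plen (fun s => ω s + ε s) γ = plen ω γ + plen ε γ := by
  induction γ with
  | nil => simp [plen]
  | cons a t ih => simp [plen, List.map_cons, List.sum_cons] at *; linarith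

lemma plen_nonneg {ε : Site → ℝ} (hε : ∀ z, 0 ≤ ε z) (γ : List Site) :
    0 ≤ plen ε γ := by
  apply List.sum_nonneg
  intro x hx
  obtain ⟨a, -, rfl⟩ := List.mem_map.mp hx
  exact hε a

lemma tail_offaxis {ε : Site → ℝ} (hvan : ∀ z : Site, z.1 * z.2 ≠ 0 → ε z = 0) :
    ∀ (t : List Site) (a : Site), 1 ≤ a.1 → 1 ≤ a.2 →
      List.Chain' IsStep (a :: t) → plen ε t = 0 := by
  intro t
  induction t with
  | nil => intro a _ _ _; simp [plen]
  | cons b s ih =>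
    intro a h1 h2 hch
    unfold List.Chain' at hch; rw [List.isChain_cons_cons] at hch
    have hb1 : 1 ≤ b.1 ∧ 1 ≤ b.2 := by
      rcases hch.1 with hs | hs <;> rw [hs] <;> constructor <;>
        simp [Prod.fst_add, Prod.snd_add] <;> omega
    have hεb : ε b = 0 := hvan b (by nlinarith [hb1.1, hb1.2])
    have := ih b hb1.1 hb1.2 hch.2
    simp [plen, List.map_cons, List.sum_cons, hεb] at *
    exact this

lemma path_decomp {z : Site} {γ : List Site} (h : IsPathTo z γ) (hlen : 3 ≤ γ.length) :
    ∃ a w t, γ = ((0,0) : Site) :: a :: w :: t ∧ IsStep ((0,0) : Site) a ∧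
      IsStep a w ∧ List.Chain' IsStep (w :: t) := by
  match γ, hlen with
  | x :: a :: w :: t, _ =>
    have hx : x = ((0,0) : Site) := by have := h.1; simpa using this
    subst hx
    have hch := h.2.2
    unfold List.Chain' at hch; rw [List.isChain_cons_cons] at hch
    rw [List.isChain_cons_cons] at hch
    exact ⟨a, w, t, rfl, hch.1, hch.2.1, hch.2.2⟩

lemma cost_split {ε : Site → ℝ} (hε : ∀ z, 0 ≤ ε z)
    (hvan : ∀ z : Site, z.1 * z.2 ≠ 0 → ε z = 0)
    (h1 : ε (1, 0) ≤ ε (0, 1) + ε (0, 2)) (h2 : ε (0, 1) ≤ ε (1, 0) + ε (2, 0))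
    {z : Site} {τ : List Site} (hτ : IsPathTo z τ) (h3 : 3 ≤ τ.length) :
    (τ[2]'(by omega) = ((1,1) : Site) ∧
      plen ε τ ≤ ε (0,0) + max (ε (1,0)) (ε (0,1)))
    ∨ (τ[2]'(by omega) ≠ ((1,1) : Site) ∧
      ε (0,0) + max (ε (1,0)) (ε (0,1)) ≤ plen ε τ) := by
  obtain ⟨a, w, t, rfl, hsa, hsw, hch⟩ := path_decomp hτ h3
  have hget : (((0,0) : Site) :: a :: w :: t)[2]'(by omega) = w := rfl
  have ha : a = ((1,0) : Site) ∨ a = ((0,1) : Site) := by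
    rcases hsa with hs | hs <;> [left; right] <;> rw [hs] <;> rfl
  have hplen : plen ε (((0,0) : Site) :: a :: w :: t)
      = ε (0,0) + ε a + ε w + plen ε t := by
    simp [plen]; ring
  have htnn : 0 ≤ plen ε t := plen_nonneg hε t
  rw [hget]
  rcases ha with rfl | rfl <;> rcases hsw with hs | hs
  · -- a = (1,0), w = (2,0)
    have hw : w = ((2,0) : Site) := by rw [hs]; rfl
    subst hw
    right
    refine ⟨by intro hcon; rw [Prod.ext_iff] at hcon; simp at hcon, ?_⟩
    have := max_le (le_add_of_nonneg_right (hε (2,0))) h2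
    rw [hplen]; linarith
  · -- a = (1,0), w = (1,1)
    have hw : w = ((1,1) : Site) := by rw [hs]; rfl
    subst hw
    left
    refine ⟨rfl, ?_⟩
    have hε11 : ε (1,1) = 0 := hvan (1,1) (by norm_num)
    have ht0 : plen ε t = 0 := tail_offaxis hvan t (1,1) (by norm_num) (by norm_num) hch
    rw [hplen, hε11, ht0]
    have := le_max_left (ε (1,0)) (ε (0,1))
    linarith
  · -- a = (0,1), w = (1,1)
    have hw : w = ((1,1) : Site) := by rw [hs]; rfl
    subst hw
    left
    refine ⟨rfl, ?_⟩
    have hε11 : ε (1,1) = 0 := hvan (1,1) (by norm_num)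
    have ht0 : plen ε t = 0 := tail_offaxis hvan t (1,1) (by norm_num) (by norm_num) hch
    rw [hplen, hε11, ht0]
    have := le_max_right (ε (1,0)) (ε (0,1))
    linarith
  · -- a = (0,1), w = (0,2)
    have hw : w = ((0,2) : Site) := by rw [hs]; rfl
    subst hw
    right
    refine ⟨by intro hcon; rw [Prod.ext_iff] at hcon; simp at hcon, ?_⟩
    have := max_le h1 (le_add_of_nonneg_right (hε (0,2)))
    rw [hplen]; linarith

lemma get2_cases {z : Site} {τ : List Site} (hτ : IsPathTo z τ) (h3 : 3 ≤ τ.length) :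
    τ[2]'(by omega) = ((2,0) : Site) ∨ τ[2]'(by omega) = ((1,1) : Site) ∨
      τ[2]'(by omega) = ((0,2) : Site) := by
  obtain ⟨a, w, t, rfl, hsa, hsw, -⟩ := path_decomp hτ h3
  have hget : (((0,0) : Site) :: a :: w :: t)[2]'(by omega) = w := rfl
  rw [hget]
  have ha : a = ((1,0) : Site) ∨ a = ((0,1) : Site) := by
    rcases hsa with hs | hs <;> [left; right] <;> rw [hs] <;> rfl
  rcases ha with rfl | rfl <;> rcases hsw with hs | hs <;> rw [hs] <;> simp [Prod.ext_iff]

/-- Step I of the proof of Theorem 2: if `ε` vanishes off the axes and satisfies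
`ε(0,1)+ε(0,2) ≥ ε(1,0)` and `ε(1,0)+ε(2,0) ≥ ε(0,1)`, then
`V(T_{(1,1)}^{ω+ε}) ⊆ V(T_{(1,1)}^ω)`. -/
theorem tree_shrinks (ω ε : Site → ℝ) (hω : ∀ z : Site, 0 ≤ ω z)
    (hε : ∀ z : Site, 0 ≤ ε z) (hvan : ∀ z : Site, z.1 * z.2 ≠ 0 → ε z = 0)
    (h1 : ε (1, 0) ≤ ε (0, 1) + ε (0, 2)) (h2 : ε (0, 1) ≤ ε (1, 0) + ε (2, 0)) :
    treeV (fun s => ω s + ε s) (1, 1) ⊆ treeV ω (1, 1) := by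
  classical
  set ω' : Site → ℝ := fun s => ω s + ε s with hω'
  intro z' hz'
  obtain ⟨hquad, hmem⟩ := hz'
  -- extract the low-optimal path for ω'
  by_cases hex' : ∃ γ : List Site, IsLowOptimal ω' z' γ
  swap
  · rw [lowOpt, dif_neg hex'] at hmem; simp at hmem
  rw [lowOpt, dif_pos hex'] at hmem
  set γ' : List Site := hex'.choose with hγ'def
  have hlo' : IsLowOptimal ω' z' γ' := hex'.choose_spec
  have hpath' : IsPathTo z' γ' := hlo'.1.1
  -- (1,1) is at index 2 of γ'
  obtain ⟨⟨i, hi⟩, hget⟩ := List.mem_iff_get.mp hmem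
  have hsum := path_get_sum hpath' i hi
  rw [hget] at hsum
  have hi2 : i = 2 := by simp at hsum; omega
  subst hi2
  have h3' : 3 ≤ γ'.length := hi
  have hget2' : γ'[2]'(by omega) = ((1,1) : Site) := by
    rw [← hget]; rfl
  -- every path to z' has the same length as γ'
  have hlen_eq : ∀ {τ : List Site}, IsPathTo z' τ → τ.length = γ'.length := by
    intro τ hτ
    have := path_length hτ; have := path_length hpath'; omega
  have hΓne : ∃ γ, IsPathTo z' γ := ⟨γ', hpath'⟩
  -- cost of γ' is at most C
  set C : ℝ := ε (0,0) + max (ε (1,0)) (ε (0,1)) with hC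
  have hc' : plen ε γ' ≤ C := by
    rcases cost_split hε hvan h1 h2 hpath' h3' with ⟨-, hb⟩ | ⟨hne, -⟩
    · exact hb
    · exact absurd hget2' hne
  -- no ω'-optimal path passes through (2,0)
  have H2 : ∀ τ : List Site, IsOptimal ω' z' τ → ∀ (h : 3 ≤ τ.length),
      τ[2]'(by omega) ≠ ((2,0) : Site) := by
    intro τ hτ hlt hcon
    have hbel := hlo'.2 τ hτ 2 (by omega) (by omega)
    rw [List.get_eq_getElem, List.get_eq_getElem] at hbel
    rw [hget2', hcon] at hbel
    norm_num at hbel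
  -- an ω-optimal path
  obtain ⟨γs, hγs⟩ := exists_optimal ω z' hΓne
  have h3s : 3 ≤ γs.length := by rw [hlen_eq hγs.1]; omega
  -- K1 : there is an ω-optimal path through (1,1)
  have K1 : ∃ σ : List Site, IsOptimal ω z' σ ∧ ∃ (h : 3 ≤ σ.length),
      σ[2]'(by omega) = ((1,1) : Site) := by
    by_cases hstar : γs[2]'(by omega) = ((1,1) : Site)
    · exact ⟨γs, hγs, h3s, hstar⟩
    · -- γs passes through (2,0) or (0,2), so its ε-cost is at least C
      have hcs : C ≤ plen ε γs := by
        rcases cost_split hε hvan h1 h2 hγs.1 h3s with ⟨he, -⟩ | ⟨-, hb⟩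
        · exact absurd he hstar
        · exact hb
      refine ⟨γ', ⟨hpath', ?_⟩, h3', hget2'⟩
      intro τ hτ
      have e1 : plen ω' γ' = plen ω γ' + plen ε γ' := plen_add ω ε γ'
      have e2 : plen ω' γs = plen ω γs + plen ε γs := plen_add ω ε γs
      have e3 := hlo'.1.2 γs hγs.1
      have e4 := hγs.2 τ hτ
      linarith
  obtain ⟨σ, hσopt, h3σ, hσget⟩ := K1
  -- K2 : no ω-optimal path passes through (2,0)
  have K2 : ∀ τ : List Site, IsOptimal ω z' τ → ∀ (h : 3 ≤ τ.length),
      τ[2]'(by omega) ≠ ((2,0) : Site) := by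
    intro τ hτ hlt hcon
    have hct : C ≤ plen ε τ := by
      rcases cost_split hε hvan h1 h2 hτ.1 hlt with ⟨he, -⟩ | ⟨-, hb⟩
      · rw [he] at hcon; simp [Prod.ext_iff] at hcon
      · exact hb
    have hτopt' : IsOptimal ω' z' τ := by
      refine ⟨hτ.1, fun ρ hρ => ?_⟩
      have e1 : plen ω' τ = plen ω τ + plen ε τ := plen_add ω ε τ
      have e2 : plen ω' γ' = plen ω γ' + plen ε γ' := plen_add ω ε γ'
      have e3 := hτ.2 γ' hpath'
      have e4 := hlo'.1.2 ρ hρ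
      linarith
    exact H2 τ hτopt' hlt hcon
  -- the low-optimal path for ω exists
  have hexω : ∃ γ : List Site, IsLowOptimal ω z' γ := exists_lowOptimal ω z' hΓne
  refine ⟨hquad, ?_⟩
  rw [lowOpt, dif_pos hexω]
  set γ₀ : List Site := hexω.choose with hγ₀def
  have hlo₀ : IsLowOptimal ω z' γ₀ := hexω.choose_spec
  have h3₀ : 3 ≤ γ₀.length := by rw [hlen_eq hlo₀.1.1]; omega
  have hbel := hlo₀.2 σ hσopt 2 (by omega) (by omega)
  rw [List.get_eq_getElem, List.get_eq_getElem, hσget] at hbel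
  have hcases := get2_cases hlo₀.1.1 h3₀
  have hne20 := K2 γ₀ hlo₀.1 h3₀
  have hget2₀ : γ₀[2]'(by omega) = ((1,1) : Site) := by
    rcases hcases with hc | hc | hc
    · exact absurd hc hne20
    · exact hc
    · rw [hc] at hbel; norm_num at hbel
  have : γ₀.get ⟨2, by omega⟩ = ((1,1) : Site) := by
    rw [List.get_eq_getElem]; exact hget2₀
  rw [← this]
  exact List.get_mem γ₀ ⟨2, by omega⟩
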